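/- For every integer r ≥ 0, the subcomplex I_r ⊆ D*^{⊗(r+1)} (the span of the tensors all of whose factors are Heaviside or Dirac functions) has zero cohomology in every degree. -/

import Mathlib

/-- Basis labels for the differential graded algebra `D*` over `k`:
`one` is the constant function `1` (degree 0), `Y s` is the Heaviside function
with singular support `{s}` (degree 0), and `om s` is the Dirac function with
singular support `{s}` (degree 1). -/
inductive DB : Type
  | one : DB
  | Y : ℤ → DB
  | om : ℤ → DB
  deriving DecidableEq

/-- cohomological degree of a basis element -/
def DB.deg : DB → ℕ
  | .one => 0
  | .Y _ => 0
  | .om _ => 1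

/-- singular support of a basis element -/
def DB.supp : DB → Finset ℤ
  | .one => ∅
  | .Y s => {s}
  | .om s => {s}

variable (k : Type) [CommRing k]

/-- The `n`-fold tensor power `D*^{⊗n}` of the complex `D*` over `k`, modelled as the
free `k`-module on the basis of decomposable tensors `f₁ ⊗ ⋯ ⊗ f_n` of basis elements. -/
abbrev Tot (n : ℕ) : Type := (Fin n → DB) →₀ k

/-- total (cohomological) degree of a basis tensor -/
def degT {n : ℕ} (g : Fin n → DB) : ℕ := ∑ i, (g i).deg

/-- the homogeneous degree-`i` component of `D*^{⊗n}` -/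
def homog (n i : ℕ) : Submodule k (Tot k n) where
  carrier := {x | ∀ g, x g ≠ 0 → degT g = i}
  add_mem' := by
    intro x y hx hy g hg
    by_cases h : x g = 0
    · refine hy g ?_
      intro h'; apply hg; simp [Finsupp.add_apply, h, h']
    · exact hx g h
  zero_mem' := by intro g hg; simp at hg
  smul_mem' := by
    intro c x hx g hg
    refine hx g fun h => hg ?_
    simp [Finsupp.smul_apply, h]

lemma mem_homog {n i : ℕ} {x : Tot k n} :
    x ∈ homog k n i ↔ ∀ g, x g ≠ 0 → degT g = i := Iff.rfl

/-- `I` : the span of the basis tensors `f₀ ⊗ ⋯ ⊗ f_r` in which every factor is a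
Heaviside or a Dirac function (no factor equals `1`). -/
def noOne (n : ℕ) : Submodule k (Tot k n) where
  carrier := {x | ∀ g, x g ≠ 0 → ∀ i, g i ≠ DB.one}
  add_mem' := by
    intro x y hx hy g hg
    by_cases h : x g = 0
    · refine hy g ?_
      intro h'; apply hg; simp [Finsupp.add_apply, h, h']
    · exact hx g h
  zero_mem' := by intro g hg; simp at hg
  smul_mem' := by
    intro c x hx g hg
    refine hx g fun h => hg ?_
    simp [Finsupp.smul_apply, h]

lemma mem_noOne {n : ℕ} {x : Tot k n} :
    x ∈ noOne k n ↔ ∀ g, x g ≠ 0 → ∀ i, g i ≠ DB.one := Iff.rfl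

/-- The Koszul-sign differential on a basis tensor:
`d(f₁ ⊗ ⋯ ⊗ f_n) = Σ_i (-1)^{deg f₁ + ⋯ + deg f_{i-1}} f₁ ⊗ ⋯ ⊗ d f_i ⊗ ⋯ ⊗ f_n`,
where `d(Y s) = - ω_s`, `d 1 = 0`, `d (ω s) = 0`. -/
noncomputable def dB {n : ℕ} (g : Fin n → DB) : Tot k n :=
  ∑ i : Fin n,
    match g i with
    | DB.Y s =>
        Finsupp.single (Function.update g i (DB.om s))
          (-(-1 : k) ^ (∑ j ∈ Finset.univ.filter (fun j : Fin n => j < i), (g j).deg))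
    | _ => (0 : Tot k n)

/-- the total differential of the complex `D*^{⊗n}` (it raises degree by one) -/
noncomputable def dT (n : ℕ) : Tot k n →ₗ[k] Tot k n :=
  Finsupp.linearCombination k (dB k (n := n))


/-! ### Auxiliary material for the proof -/

/-- the `i`-th summand of the differential `dB` -/
noncomputable def dBterm {n : ℕ} (g : Fin n → DB) (i : Fin n) : Tot k n :=
  match g i with
  | DB.Y s =>
      Finsupp.single (Function.update g i (DB.om s))
        (-(-1 : k) ^ (∑ j ∈ Finset.univ.filter (fun j : Fin n => j < i), (g j).deg))
  | _ => (0 : Tot k n)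

lemma dB_eq {n : ℕ} (g : Fin n → DB) : dB k g = ∑ i, dBterm k g i := rfl

lemma dBterm_Y {n : ℕ} {g : Fin n → DB} {i : Fin n} {s : ℤ} (h : g i = DB.Y s) :
    dBterm k g i = Finsupp.single (Function.update g i (DB.om s))
      (-(-1 : k) ^ (∑ j ∈ Finset.univ.filter (fun j : Fin n => j < i), (g j).deg)) := by
  unfold dBterm; rw [h]

lemma dBterm_om {n : ℕ} {g : Fin n → DB} {i : Fin n} {s : ℤ} (h : g i = DB.om s) :
    dBterm k g i = 0 := by
  unfold dBterm; rw [h]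

lemma dBterm_one {n : ℕ} {g : Fin n → DB} {i : Fin n} (h : g i = DB.one) :
    dBterm k g i = 0 := by
  unfold dBterm; rw [h]

/-- the contracting homotopy at the level of basis tensors: it acts on the first
factor by `ω_s ↦ -Y_s` and kills tensors whose first factor is not a Dirac. -/
noncomputable def hB {n : ℕ} (g : Fin (n + 1) → DB) : Tot k (n + 1) :=
  match g 0 with
  | DB.om s => Finsupp.single (Function.update g 0 (DB.Y s)) (-1 : k)
  | _ => (0 : Tot k (n + 1))

lemma hB_om {n : ℕ} {g : Fin (n + 1) → DB} {s : ℤ} (h : g 0 = DB.om s) :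
    hB k g = Finsupp.single (Function.update g 0 (DB.Y s)) (-1 : k) := by
  unfold hB; rw [h]

lemma hB_Y {n : ℕ} {g : Fin (n + 1) → DB} {s : ℤ} (h : g 0 = DB.Y s) :
    hB k g = 0 := by
  unfold hB; rw [h]

lemma hB_one {n : ℕ} {g : Fin (n + 1) → DB} (h : g 0 = DB.one) :
    hB k g = 0 := by
  unfold hB; rw [h]

/-- the contracting homotopy as a linear map -/
noncomputable def hT (n : ℕ) : Tot k (n + 1) →ₗ[k] Tot k (n + 1) :=
  Finsupp.linearCombination k (hB k (n := n))

lemma hT_single {n : ℕ} (g : Fin (n + 1) → DB) (c : k) :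
    hT k n (Finsupp.single g c) = c • hB k g := by
  simp [hT, Finsupp.linearCombination_single]

lemma dT_single {n : ℕ} (g : Fin n → DB) (c : k) :
    dT k n (Finsupp.single g c) = c • dB k g := by
  simp [dT, Finsupp.linearCombination_single]

lemma filter_lt_zero_empty (n : ℕ) :
    (Finset.univ.filter (fun j : Fin (n + 1) => j < 0)) = ∅ := by
  ext j; simp [Fin.not_lt_zero]

/-- sign bookkeeping: replacing an `ω` by a `Y` in position `0` drops the
Koszul sign exponent at any later position by `1`. -/
lemma sigma_update {n : ℕ} (g : Fin (n + 1) → DB) (s : ℤ) {i : Fin (n + 1)}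
    (hi : i ≠ 0) (h0 : g 0 = DB.om s) :
    (∑ j ∈ Finset.univ.filter (fun j : Fin (n + 1) => j < i), (g j).deg)
      = (∑ j ∈ Finset.univ.filter (fun j : Fin (n + 1) => j < i),
          ((Function.update g 0 (DB.Y s)) j).deg) + 1 := by
  have h0mem : (0 : Fin (n + 1)) ∈ Finset.univ.filter (fun j : Fin (n + 1) => j < i) := by
    simp [Fin.pos_of_ne_zero hi]
  rw [← Finset.add_sum_erase _ _ h0mem, ← Finset.add_sum_erase _ (fun j => ((Function.update g 0 (DB.Y s)) j).deg) h0mem]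
  have he : ∀ j ∈ (Finset.univ.filter (fun j : Fin (n + 1) => j < i)).erase 0,
      ((Function.update g 0 (DB.Y s)) j).deg = (g j).deg := by
    intro j hj
    rw [Function.update_of_ne (Finset.ne_of_mem_erase hj)]
  rw [Finset.sum_congr rfl he, h0, Function.update_self]
  simp [DB.deg, add_comm]

/-- Per-index identity, case where the first factor is a Heaviside. -/
lemma keyA_term {n : ℕ} (g : Fin (n + 1) → DB) (s : ℤ) (h0 : g 0 = DB.Y s)
    (i : Fin (n + 1)) :
    hT k n (dBterm k g i)
      = if i = 0 then Finsupp.single g (1 : k) else 0 := by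
  by_cases hi : i = 0
  · subst hi
    rw [dBterm_Y k h0, if_pos rfl, hT_single, filter_lt_zero_empty]
    have hup : (Function.update g 0 (DB.om s)) 0 = DB.om s := Function.update_self _ _ _
    rw [hB_om k hup, Function.update_idem]
    have : Function.update g 0 (DB.Y s) = g := by rw [← h0, Function.update_eq_self]
    rw [this]
    simp
  · rw [if_neg hi]
    cases hgi : g i with
    | one => rw [dBterm_one k hgi, map_zero]
    | om t => rw [dBterm_om k hgi, map_zero]
    | Y t =>
      rw [dBterm_Y k hgi, hT_single]
      have hup0 : (Function.update g i (DB.om t)) 0 = DB.Y s := by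
        rw [Function.update_of_ne (Ne.symm hi), h0]
      rw [hB_Y k hup0, smul_zero]

/-- Per-index identity, case where the first factor is a Dirac. -/
lemma keyB_term {n : ℕ} (g : Fin (n + 1) → DB) (s : ℤ) (h0 : g 0 = DB.om s)
    (i : Fin (n + 1)) :
    (-1 : k) • dBterm k (Function.update g 0 (DB.Y s)) i + hT k n (dBterm k g i)
      = if i = 0 then Finsupp.single g (1 : k) else 0 := by
  set g' := Function.update g 0 (DB.Y s) with hg'
  by_cases hi : i = 0
  · subst hi
    have hg'0 : g' 0 = DB.Y s := Function.update_self _ _ _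
    rw [dBterm_Y k hg'0, dBterm_om k h0, map_zero, add_zero, if_pos rfl,
      filter_lt_zero_empty]
    have : Function.update g' 0 (DB.om s) = g := by
      rw [hg', Function.update_idem, ← h0, Function.update_eq_self]
    rw [this]
    rw [Finsupp.smul_single]
    norm_num
  · rw [if_neg hi]
    have hgi' : g' i = g i := Function.update_of_ne hi _ _
    cases hgi : g i with
    | one =>
      rw [dBterm_one k hgi, dBterm_one k (hgi' ▸ hgi : g' i = DB.one), map_zero,
        smul_zero, add_zero]
    | om t =>
      rw [dBterm_om k hgi, dBterm_om k (hgi' ▸ hgi : g' i = DB.om t), map_zero,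
        smul_zero, add_zero]
    | Y t =>
      rw [dBterm_Y k hgi, dBterm_Y k (hgi' ▸ hgi : g' i = DB.Y t), hT_single]
      have hup0 : (Function.update g i (DB.om t)) 0 = DB.om s := by
        rw [Function.update_of_ne (Ne.symm hi), h0]
      rw [hB_om k hup0]
      have hcomm : Function.update (Function.update g i (DB.om t)) 0 (DB.Y s)
          = Function.update g' i (DB.om t) := by
        rw [hg', Function.update_comm (Ne.symm hi)]
      rw [hcomm]
      rw [Finsupp.smul_single, Finsupp.smul_single, ← Finsupp.single_add]
      rw [sigma_update g s hi h0]
      ring_nf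
      simp [pow_succ, hg']

/-- The key identity `d ∘ h + h ∘ d = id` on basis tensors with no `one` factor. -/
lemma key {n : ℕ} (g : Fin (n + 1) → DB) (hg : g 0 ≠ DB.one) :
    dT k (n + 1) (hB k g) + hT k n (dB k g) = Finsupp.single g (1 : k) := by
  cases h0 : g 0 with
  | one => exact absurd h0 hg
  | Y s =>
    rw [hB_Y k h0, map_zero, zero_add, dB_eq, map_sum]
    rw [Finset.sum_congr rfl (fun i _ => keyA_term k g s h0 i)]
    simp
  | om s =>
    rw [hB_om k h0, dT_single, dB_eq, dB_eq, Finset.smul_sum, map_sum,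
      ← Finset.sum_add_distrib]
    rw [Finset.sum_congr rfl (fun i _ => keyB_term k g s h0 i)]
    simp

/-- The homotopy identity extended by linearity to all of `noOne`. -/
lemma homotopy {n : ℕ} (z : Tot k (n + 1)) (hz : z ∈ noOne k (n + 1)) :
    dT k (n + 1) (hT k n z) + hT k n (dT k (n + 1) z) = z := by
  conv_lhs => rw [← Finsupp.sum_single z, Finsupp.sum, map_sum, map_sum, map_sum, map_sum]
  rw [← Finset.sum_add_distrib]
  conv_rhs => rw [← Finsupp.sum_single z, Finsupp.sum]
  refine Finset.sum_congr rfl fun g hg => ?_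
  have hg0 : g 0 ≠ DB.one := hz g (Finsupp.mem_support_iff.1 hg) 0
  rw [hT_single, dT_single, map_smul, map_smul, ← smul_add, key k g hg0,
    Finsupp.smul_single, smul_eq_mul, mul_one]

lemma hT_eq_sum {n : ℕ} (z : Tot k (n + 1)) :
    hT k n z = ∑ g ∈ z.support, (z g) • hB k g := by
  conv_lhs => rw [← Finsupp.sum_single z, Finsupp.sum, map_sum]
  exact Finset.sum_congr rfl fun g _ => hT_single k g (z g)

lemma hT_mem_noOne {n : ℕ} (z : Tot k (n + 1)) (hz : z ∈ noOne k (n + 1)) :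
    hT k n z ∈ noOne k (n + 1) := by
  rw [hT_eq_sum]
  refine Submodule.sum_mem _ fun g hg => ?_
  refine Submodule.smul_mem _ _ ?_
  have hgn : ∀ i, g i ≠ DB.one := hz g (Finsupp.mem_support_iff.1 hg)
  cases h0 : g 0 with
  | one => exact absurd h0 (hgn 0)
  | Y s => rw [hB_Y k h0]; exact Submodule.zero_mem _
  | om s =>
    rw [hB_om k h0]
    intro g' hne i
    by_cases hgg : g' = Function.update g 0 (DB.Y s)
    · subst hgg
      by_cases hi : i = 0
      · subst hi; rw [Function.update_self]; simp
      · rw [Function.update_of_ne hi]; exact hgn i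
    · exact absurd (Finsupp.single_eq_of_ne hgg) hne

lemma degT_update {n : ℕ} (g : Fin (n + 1) → DB) (s : ℤ) (hs : g 0 = DB.om s) :
    degT (Function.update g 0 (DB.Y s)) + 1 = degT g := by
  unfold degT
  rw [Fin.sum_univ_succ, Fin.sum_univ_succ (f := fun i => (g i).deg)]
  have h1 : ∀ j : Fin n, (Function.update g 0 (DB.Y s) j.succ).deg = (g j.succ).deg := by
    intro j; rw [Function.update_of_ne (Fin.succ_ne_zero j)]
  rw [Finset.sum_congr rfl (fun j _ => h1 j), Function.update_self, hs]
  simp [DB.deg]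
  omega

lemma hT_mem_homog {n : ℕ} (i : ℕ) (z : Tot k (n + 1)) (hz : z ∈ noOne k (n + 1))
    (hh : z ∈ homog k (n + 1) (i + 1)) :
    hT k n z ∈ homog k (n + 1) i := by
  rw [hT_eq_sum]
  refine Submodule.sum_mem _ fun g hg => ?_
  refine Submodule.smul_mem _ _ ?_
  have hgz : z g ≠ 0 := Finsupp.mem_support_iff.1 hg
  have hgn : ∀ j, g j ≠ DB.one := hz g hgz
  have hdeg : degT g = i + 1 := hh g hgz
  cases h0 : g 0 with
  | one => exact absurd h0 (hgn 0)
  | Y s => rw [hB_Y k h0]; exact Submodule.zero_mem _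
  | om s =>
    rw [hB_om k h0]
    intro g' hne
    by_cases hgg : g' = Function.update g 0 (DB.Y s)
    · subst hgg
      have := degT_update g s h0
      omega
    · exact absurd (Finsupp.single_eq_of_ne hgg) hne

lemma hT_eq_zero_of_homog_zero {n : ℕ} (z : Tot k (n + 1)) (hz : z ∈ noOne k (n + 1))
    (hh : z ∈ homog k (n + 1) 0) : hT k n z = 0 := by
  rw [hT_eq_sum]
  refine Finset.sum_eq_zero fun g hg => ?_
  have hgz : z g ≠ 0 := Finsupp.mem_support_iff.1 hg
  have hgn : ∀ j, g j ≠ DB.one := hz g hgz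
  have hdeg : degT g = 0 := hh g hgz
  have hdeg0 : (g 0).deg = 0 := by
    unfold degT at hdeg
    rw [Fin.sum_univ_succ] at hdeg
    omega
  cases h0 : g 0 with
  | one => exact absurd h0 (hgn 0)
  | Y s => rw [hB_Y k h0, smul_zero]
  | om s => rw [h0] at hdeg0; simp [DB.deg] at hdeg0

/-- For every `r ≥ 0`, the subcomplex `I_r ⊆ D*^{⊗(r+1)}`
(the span of the tensors all of whose factors are Heaviside or Dirac functions)
has zero cohomology in every degree: in degree `0` every cocycle of `I_r` is zero,
and in every degree `i + 1` every cocycle of `I_r` is the differential of an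
element of `I_r` of degree `i`. -/
theorem statement1 (k : Type) [CommRing k] (r : ℕ) :
    (∀ z ∈ noOne k (r + 1), z ∈ homog k (r + 1) 0 → dT k (r + 1) z = 0 → z = 0) ∧
    (∀ i : ℕ, ∀ z ∈ noOne k (r + 1), z ∈ homog k (r + 1) (i + 1) → dT k (r + 1) z = 0 →
      ∃ w ∈ noOne k (r + 1), w ∈ homog k (r + 1) i ∧ dT k (r + 1) w = z) := by
  constructor
  · intro z hz hh hd
    have h1 := homotopy k z hz
    rw [hd, map_zero, add_zero, hT_eq_zero_of_homog_zero k z hz hh, map_zero] at h1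
    exact h1.symm
  · intro i z hz hh hd
    refine ⟨hT k r z, hT_mem_noOne k z hz, hT_mem_homog k i z hz hh, ?_⟩
    have h1 := homotopy k z hz
    rwa [hd, map_zero, add_zero] at h1
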